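/- Fix K, σ, τ > 0 and x > 0, let Φ be the standard normal cumulative distribution function, and for S > 0 set d1(S) = (ln(S/K) + (σ²/2)τ)/(σ√τ), d2(S) = d1(S) − σ√τ and α(S) = x·(K − S)/(K·Φ(−d2(S)) − S·Φ(−d1(S))). Then α(S) tends to x as S tends to 0 from the right. That is, in the limit of the collateral asset price falling to zero, exactly x at-the-money put options fund the collateral shortfall of a position of x collateral units. -/

import Mathlib

open Real Filter

/-- The cumulative distribution function of the standard normal distribution
(Gaussian measure on ℝ with mean 0 and variance 1). -/
noncomputable def Φ (x : ℝ) : ℝ :=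
  (ProbabilityTheory.gaussianReal 0 1 (Set.Iic x)).toReal

lemma Phi_tendsto_one : Tendsto Φ atTop (nhds 1) := by
  have h := MeasureTheory.tendsto_measure_Iic_atTop (ProbabilityTheory.gaussianReal 0 1)
  rw [MeasureTheory.measure_univ] at h
  have h2 := (ENNReal.tendsto_toReal (by simp : (1 : ENNReal) ≠ ⊤)).comp h
  exact h2

lemma Phi_nonneg (s : ℝ) : 0 ≤ Φ s := ENNReal.toReal_nonneg

lemma Phi_le_one (s : ℝ) : Φ s ≤ 1 := by
  have := MeasureTheory.prob_le_one
    (μ := ProbabilityTheory.gaussianReal 0 1) (s := Set.Iic s)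
  simpa [Φ] using ENNReal.toReal_le_of_le_ofReal zero_le_one (by simpa using this)

/-- As the collateral price S → 0⁺, the put-hedging ratio α(S) = x·(K − S)/V_put(S)
tends to the reserve size x. -/
theorem alpha_tendsto_reserve (K σ τ x : ℝ) (hK : 0 < K) (hσ : 0 < σ) (hτ : 0 < τ)
    (hx : 0 < x)
    (d1 d2 α : ℝ → ℝ)
    (hd1 : ∀ S, d1 S = (Real.log (S / K) + (σ ^ 2 / 2) * τ) / (σ * Real.sqrt τ))
    (hd2 : ∀ S, d2 S = d1 S - σ * Real.sqrt τ)
    (hα : ∀ S, α S = x * (K - S) / (K * Φ (-(d2 S)) - S * Φ (-(d1 S)))) :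
    Filter.Tendsto α (nhdsWithin 0 (Set.Ioi 0)) (nhds x) := by
  have hst : 0 < σ * Real.sqrt τ := mul_pos hσ (Real.sqrt_pos.mpr hτ)
  -- log(S/K) → -∞
  have hlog : Tendsto (fun S => Real.log (S / K)) (nhdsWithin 0 (Set.Ioi 0)) atBot := by
    have : Tendsto (fun S : ℝ => S / K) (nhdsWithin 0 (Set.Ioi 0))
        (nhdsWithin 0 (Set.Ioi 0)) := by
      apply tendsto_nhdsWithin_of_tendsto_nhds_of_eventually_within
      · have h1 : Tendsto (fun S : ℝ => S / K) (nhds 0) (nhds (0 / K)) :=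
          tendsto_id.div_const K
        rw [zero_div] at h1
        exact h1.mono_left nhdsWithin_le_nhds
      · filter_upwards [self_mem_nhdsWithin] with S hS
        exact div_pos hS hK
    exact Real.tendsto_log_nhdsGT_zero.comp this
  -- d1 → -∞
  have hd1bot : Tendsto d1 (nhdsWithin 0 (Set.Ioi 0)) atBot := by
    have := (hlog.atBot_add (tendsto_const_nhds (x := (σ ^ 2 / 2) * τ))).atBot_div_const hst
    apply this.congr
    intro S; rw [hd1 S]
  -- -(d2) → +∞
  have hnd2 : Tendsto (fun S => -(d2 S)) (nhdsWithin 0 (Set.Ioi 0)) atTop := by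
    have : Tendsto (fun S => -(d1 S) + σ * Real.sqrt τ) (nhdsWithin 0 (Set.Ioi 0)) atTop :=
      (tendsto_neg_atTop_iff.mpr hd1bot).atTop_add tendsto_const_nhds
    apply this.congr
    intro S; rw [hd2 S]; ring
  -- Φ(-(d2 S)) → 1
  have hΦd2 : Tendsto (fun S => Φ (-(d2 S))) (nhdsWithin 0 (Set.Ioi 0)) (nhds 1) :=
    Phi_tendsto_one.comp hnd2
  -- S * Φ(-(d1 S)) → 0
  have hSΦ : Tendsto (fun S => S * Φ (-(d1 S))) (nhdsWithin 0 (Set.Ioi 0)) (nhds 0) := by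
    apply squeeze_zero' (f := fun S => S * Φ (-(d1 S))) (g := id)
    · filter_upwards [self_mem_nhdsWithin] with S hS
      exact mul_nonneg (le_of_lt hS) (Phi_nonneg _)
    · filter_upwards [self_mem_nhdsWithin] with S hS
      calc S * Φ (-(d1 S)) ≤ S * 1 := by
            exact mul_le_mul_of_nonneg_left (Phi_le_one _) (le_of_lt hS)
        _ = S := by ring
    · exact Filter.Tendsto.mono_left (by simpa using continuous_id.tendsto (0:ℝ))
        nhdsWithin_le_nhds
  -- denominator → K
  have hden : Tendsto (fun S => K * Φ (-(d2 S)) - S * Φ (-(d1 S)))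
      (nhdsWithin 0 (Set.Ioi 0)) (nhds K) := by
    have := (hΦd2.const_mul K).sub hSΦ
    simpa using this
  -- numerator → x * K
  have hnum : Tendsto (fun S => x * (K - S)) (nhdsWithin 0 (Set.Ioi 0)) (nhds (x * K)) := by
    have hS0 : Tendsto (fun S : ℝ => S) (nhdsWithin 0 (Set.Ioi 0)) (nhds 0) :=
      tendsto_id.mono_left nhdsWithin_le_nhds
    have := (tendsto_const_nhds (x := K) (f := nhdsWithin (0:ℝ) (Set.Ioi 0))).sub hS0
    simpa using this.const_mul x
  have := hnum.div hden (ne_of_gt hK)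
  have hxK : x * K / K = x := by field_simp
  rw [hxK] at this
  apply this.congr
  intro S; rw [hα S]; simp [Pi.div_apply]
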